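/- For every integer n ≥ 2, the algebra C₃ has level one: the closure of the GL(V)-orbit of the structure of C₃ equals the union of that orbit with the single point 0 (the zero multiplication). -/

import Mathlib

open Function Submodule

/-! Common framework: `V = ℂ^{n+1}`, `n`-ary multiplications as functions
`(Fin n → V) → V`, the action of `GL(V)` on them, orbits, and the
(n+1)-dimensional n-ary Filippov algebras of Kaygorodov–Volkov, each described
as an alternating `n`-linear map by its values on the increasing tuples of
distinct standard basis vectors (0-indexed: `bt n j` is the tuple omitting `e j`). -/

/-- The underlying space `V = ℂ^{n+1}`. -/
abbrev nV (n : ℕ) : Type := Fin (n + 1) → ℂ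

/-- The `j`-th standard basis vector of `V` (0-indexed). -/
def sb (n : ℕ) (j : Fin (n + 1)) : nV n := Pi.single j 1

/-- The increasing `n`-tuple of standard basis vectors omitting `e j`. -/
def bt (n : ℕ) (j : Fin (n + 1)) : Fin n → nV n := fun k => sb n (j.succAbove k)

/-- The action of `GL(V)` (invertible linear maps) on `n`-ary multiplications:
`(g • μ)(x₁, …, xₙ) = g (μ (g⁻¹ x₁, …, g⁻¹ xₙ))`. -/
noncomputable def glAct (n : ℕ) (g : nV n ≃ₗ[ℂ] nV n) (μ : (Fin n → nV n) → nV n) :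
    (Fin n → nV n) → nV n :=
  fun x => g (μ fun i => g.symm (x i))

/-- The `GL(V)`-orbit of an `n`-ary multiplication. -/
def glOrbit (n : ℕ) (μ : (Fin n → nV n) → nV n) : Set ((Fin n → nV n) → nV n) :=
  {ν | ∃ g : nV n ≃ₗ[ℂ] nV n, ν = glAct n g μ}

/-- The algebra `B`: `[e₂, …, e_{n+1}] = e₁` (0-indexed: the tuple omitting `e 0`
maps to `e 0`), all other increasing basis products zero. -/
def IsB (n : ℕ) (μ : AlternatingMap ℂ (nV n) (nV n) (Fin n)) : Prop :=
  μ (bt n 0) = sb n 0 ∧ ∀ j : Fin (n + 1), j ≠ 0 → μ (bt n j) = 0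

/-- The algebra `C₁`: `[e₂, …, e_{n+1}] = e₁`, `[e₁, e₃, …, e_{n+1}] = e₂`. -/
def IsC1 (n : ℕ) (μ : AlternatingMap ℂ (nV n) (nV n) (Fin n)) : Prop :=
  μ (bt n 0) = sb n 0 ∧ μ (bt n 1) = sb n 1 ∧
    ∀ j : Fin (n + 1), j ≠ 0 → j ≠ 1 → μ (bt n j) = 0

/-- The algebra `C₂(α)`: `[e₂, …, e_{n+1}] = α e₁ + e₂`, `[e₁, e₃, …, e_{n+1}] = e₂`. -/
def IsC2 (n : ℕ) (α : ℂ) (μ : AlternatingMap ℂ (nV n) (nV n) (Fin n)) : Prop :=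
  μ (bt n 0) = α • sb n 0 + sb n 1 ∧ μ (bt n 1) = sb n 1 ∧
    ∀ j : Fin (n + 1), j ≠ 0 → j ≠ 1 → μ (bt n j) = 0

/-- The algebra `C₃`: `[e₁, e₃, …, e_{n+1}] = e₁`, `[e₂, e₃, …, e_{n+1}] = e₂`. -/
def IsC3 (n : ℕ) (μ : AlternatingMap ℂ (nV n) (nV n) (Fin n)) : Prop :=
  μ (bt n 1) = sb n 0 ∧ μ (bt n 0) = sb n 1 ∧
    ∀ j : Fin (n + 1), j ≠ 0 → j ≠ 1 → μ (bt n j) = 0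

/-- The algebra `D_r`: `[e₁, …, e_{i-1}, e_{i+1}, …, e_{n+1}] = e_i` for `1 ≤ i ≤ r`
(0-indexed: the tuple omitting `e j` maps to `e j` for `j < r` and to `0` otherwise). -/
def IsD (n r : ℕ) (μ : AlternatingMap ℂ (nV n) (nV n) (Fin n)) : Prop :=
  ∀ j : Fin (n + 1), ((j : ℕ) < r → μ (bt n j) = sb n j) ∧ (r ≤ (j : ℕ) → μ (bt n j) = 0)

namespace C3L

/-- determinant of the matrix with rows `w, x 0, …, x (n-1)`, as alternating map in `x`,
linear in `w`. -/
noncomputable def dC (n : ℕ) : nV n →ₗ[ℂ] AlternatingMap ℂ (nV n) ℂ (Fin n) :=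
  (Matrix.detRowAlternating : AlternatingMap ℂ (nV n) ℂ (Fin (n+1))).curryLeft

lemma dC_apply (n : ℕ) (w : nV n) (x : Fin n → nV n) :
    dC n w x = Matrix.det (Matrix.of (Matrix.vecCons w x)) := rfl

/-- `ν_{u,v}(x) = det[u,x] • v - det[v,x] • u`. -/
noncomputable def nuA (n : ℕ) (u v : nV n) : AlternatingMap ℂ (nV n) (nV n) (Fin n) :=
  (LinearMap.toSpanSingleton ℂ (nV n) v).compAlternatingMap (dC n u)
    - (LinearMap.toSpanSingleton ℂ (nV n) u).compAlternatingMap (dC n v)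

lemma nuA_apply (n : ℕ) (u v : nV n) (x : Fin n → nV n) :
    nuA n u v x = dC n u x • v - dC n v x • u := by
  simp [nuA, LinearMap.toSpanSingleton_apply]

lemma dC_bt (n : ℕ) (w : nV n) (j : Fin (n+1)) :
    dC n w (bt n j) = (-1 : ℂ) ^ (j : ℕ) * w j := by
  rw [dC_apply, Matrix.det_succ_row_zero]
  have hminor : ∀ c : Fin (n+1),
      Matrix.det ((Matrix.of (Matrix.vecCons w (bt n j))).submatrix Fin.succ c.succAbove)
        = if c = j then 1 else 0 := by
    intro c
    by_cases hcj : c = j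
    · subst hcj
      have h1 : ((Matrix.of (Matrix.vecCons w (bt n c))).submatrix Fin.succ c.succAbove)
          = (1 : Matrix (Fin n) (Fin n) ℂ) := by
        ext k l
        simp only [Matrix.submatrix_apply, Matrix.of_apply, Matrix.cons_val_succ]
        rw [bt, sb, Pi.single_apply, Matrix.one_apply]
        by_cases hkl : k = l
        · simp [hkl]
        · rw [if_neg hkl, if_neg]
          intro hc
          exact hkl (Fin.succAbove_right_injective hc).symm
      rw [h1, Matrix.det_one, if_pos rfl]
    · rw [if_neg hcj]
      obtain ⟨l, hl⟩ := Fin.exists_succAbove_eq (Ne.symm hcj)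
      apply Matrix.det_eq_zero_of_column_eq_zero l
      intro k
      simp only [Matrix.submatrix_apply, Matrix.of_apply, Matrix.cons_val_succ, hl]
      rw [bt, sb, Pi.single_apply, if_neg]
      exact (Fin.succAbove_ne j k).symm
  calc ∑ c : Fin (n+1), (-1:ℂ)^(c:ℕ) * (Matrix.of (Matrix.vecCons w (bt n j))) 0 c *
          Matrix.det ((Matrix.of (Matrix.vecCons w (bt n j))).submatrix Fin.succ c.succAbove)
      = ∑ c : Fin (n+1), if c = j then (-1:ℂ)^(c:ℕ) * w c else 0 := by
        refine Finset.sum_congr rfl fun c _ => ?_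
        rw [hminor c]
        by_cases hcj : c = j <;> simp [hcj]
    _ = (-1:ℂ)^(j:ℕ) * w j := by simp

lemma nuA_bt (n : ℕ) (u v : nV n) (j : Fin (n+1)) :
    nuA n u v (bt n j) = ((-1:ℂ)^(j:ℕ) * u j) • v - ((-1:ℂ)^(j:ℕ) * v j) • u := by
  rw [nuA_apply, dC_bt, dC_bt]

/-- Two alternating maps agreeing on the increasing basis tuples are equal. -/
lemma ext_of_bt {n : ℕ} {f g : AlternatingMap ℂ (nV n) (nV n) (Fin n)}
    (h : ∀ j, f (bt n j) = g (bt n j)) : f = g := by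
  apply Module.Basis.ext_alternating (Pi.basisFun ℂ (Fin (n+1)))
  intro v hv
  have hns : ¬ Function.Surjective v := by
    intro hs
    have := Fintype.card_le_of_surjective v hs
    simp at this
  rw [Function.Surjective] at hns
  push_neg at hns
  obtain ⟨j, hj⟩ := hns
  have hw : ∀ i, ∃ k, j.succAbove k = v i := fun i => Fin.exists_succAbove_eq (hj i)
  choose w hwv using hw
  have hwinj : Function.Injective w := by
    intro a b hab
    apply hv
    rw [← hwv a, ← hwv b, hab]
  have hbij : Function.Bijective w := Finite.injective_iff_bijective.1 hwinj
  let σ : Equiv.Perm (Fin n) := Equiv.ofBijective w hbij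
  have hcomp : (fun i => (Pi.basisFun ℂ (Fin (n+1))) (v i)) = (bt n j) ∘ σ := by
    funext i
    simp only [Function.comp_apply, bt, sb]
    rw [show σ i = w i from rfl, hwv i, Pi.basisFun_apply]
  rw [hcomp]
  rw [AlternatingMap.map_perm, AlternatingMap.map_perm, h j]


lemma dC_map (n : ℕ) (h : nV n →ₗ[ℂ] nV n) (w : nV n) (x : Fin n → nV n) :
    dC n (h w) (fun i => h (x i)) = LinearMap.det h * dC n w x := by
  rw [dC_apply, dC_apply]
  have key : Matrix.of (Matrix.vecCons (h w) (fun i => h (x i)))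
      = Matrix.of (Matrix.vecCons w x) * (LinearMap.toMatrix' h).transpose := by
    ext r c
    have happ : ∀ y : nV n, h y c = ∑ l, LinearMap.toMatrix' h c l * y l := by
      intro y
      conv_lhs => rw [← Matrix.toLin'_toMatrix' h]
      rw [Matrix.toLin'_apply]
      simp [Matrix.mulVec, dotProduct]
    have hrow : (Matrix.vecCons (h w) (fun i => h (x i))) r
        = h ((Matrix.vecCons w x) r) := by
      refine Fin.cases ?_ ?_ r <;> simp
    rw [Matrix.of_apply, hrow, happ, Matrix.mul_apply]
    simp only [Matrix.transpose_apply, Matrix.of_apply]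
    exact Finset.sum_congr rfl fun l _ => mul_comm _ _
  rw [key, Matrix.det_mul, Matrix.det_transpose, LinearMap.det_toMatrix', mul_comm]

lemma det_symm (n : ℕ) (g : nV n ≃ₗ[ℂ] nV n) :
    LinearMap.det (g.symm.toLinearMap) = (LinearMap.det g.toLinearMap)⁻¹ := by
  have hcomp : g.toLinearMap ∘ₗ g.symm.toLinearMap = LinearMap.id := by
    ext y
    simp
  have := LinearMap.det_comp g.toLinearMap g.symm.toLinearMap
  rw [hcomp, LinearMap.det_id] at this
  exact eq_inv_of_mul_eq_one_left (by linear_combination -this)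

lemma glAct_nuA (n : ℕ) (g : nV n ≃ₗ[ℂ] nV n) (u v : nV n) :
    glAct n g ⇑(nuA n u v)
      = ⇑(nuA n ((LinearMap.det g.toLinearMap)⁻¹ • g u) (g v)) := by
  funext x
  have hdet : ∀ w : nV n, dC n w (fun i => g.symm (x i))
      = (LinearMap.det g.toLinearMap)⁻¹ * dC n (g w) x := by
    intro w
    have := dC_map n g.symm.toLinearMap (g w) x
    simp only [LinearEquiv.coe_coe, LinearEquiv.symm_apply_apply] at this
    rw [this, det_symm]
  show g ((nuA n u v) fun i => g.symm (x i)) = _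
  rw [nuA_apply, nuA_apply]
  rw [map_sub, map_smul, map_smul, hdet u, hdet v, map_smul,
    AlternatingMap.smul_apply, smul_eq_mul]
  rw [smul_smul]
  ring_nf


lemma sb_apply (n : ℕ) (i j : Fin (n+1)) : sb n i j = if j = i then 1 else 0 := by
  rw [sb, Pi.single_apply]

lemma mu_eq {n : ℕ} (hn : 2 ≤ n) {μ : AlternatingMap ℂ (nV n) (nV n) (Fin n)}
    (hμ : IsC3 n μ) :
    μ = nuA n (sb n 0) (sb n 1) := by
  obtain ⟨m, rfl⟩ : ∃ m, n = m + 2 := ⟨n - 2, by omega⟩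
  apply ext_of_bt
  intro j
  rw [nuA_bt]
  by_cases hj0 : j = 0
  · subst hj0
    rw [hμ.2.1]
    norm_num [sb_apply]
  · by_cases hj1 : j = 1
    · subst hj1
      rw [hμ.1]
      norm_num [sb_apply]
    · rw [hμ.2.2 j hj0 hj1, sb_apply, sb_apply, if_neg hj0, if_neg hj1]
      simp

lemma orbit_form {n : ℕ} (hn : 2 ≤ n) {μ : AlternatingMap ℂ (nV n) (nV n) (Fin n)}
    (hμ : IsC3 n μ) (g : nV n ≃ₗ[ℂ] nV n) :
    glAct n g ⇑μ
      = ⇑(nuA n ((LinearMap.det g.toLinearMap)⁻¹ • g (sb n 0)) (g (sb n 1))) := by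
  rw [mu_eq hn hμ, glAct_nuA]


lemma fin_two_ne_zero (m : ℕ) : (2 : Fin (m+3)) ≠ 0 := by
  simp [Fin.ext_iff, Nat.mod_eq_of_lt (show 2 < m+3 by omega)]

lemma fin_two_ne_one (m : ℕ) : (2 : Fin (m+3)) ≠ 1 := by
  simp [Fin.ext_iff, Nat.mod_eq_of_lt (show 2 < m+3 by omega)]

lemma nuA_mem_orbit {n : ℕ} (hn : 2 ≤ n) {μ : AlternatingMap ℂ (nV n) (nV n) (Fin n)}
    (hμ : IsC3 n μ) (u v : nV n) (p q : Fin (n+1))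
    (hm : u p * v q - v p * u q ≠ 0) : ⇑(nuA n u v) ∈ glOrbit n ⇑μ := by
  have hpq : p ≠ q := by rintro rfl; exact hm (by ring)
  obtain ⟨m, rfl⟩ : ∃ m, n = m + 2 := ⟨n - 2, by omega⟩
  have h01 : (0 : Fin (m+3)) ≠ 1 := by simp [Fin.ext_iff]
  -- a permutation τ with τ 0 = p, τ 1 = q
  set q' : Fin (m+3) := (Equiv.swap 0 p) q with hq'def
  have hswq' : (Equiv.swap 0 p) q' = q := Equiv.swap_apply_self _ _ _
  have hq'0 : q' ≠ 0 := by
    intro h0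
    apply hpq
    rw [h0, Equiv.swap_apply_left] at hswq'
    exact hswq' 
  set τ : Equiv.Perm (Fin (m+3)) := (Equiv.swap 1 q').trans (Equiv.swap 0 p) with hτdef
  have hτ0 : τ 0 = p := by
    rw [hτdef, Equiv.trans_apply, Equiv.swap_apply_of_ne_of_ne h01 (Ne.symm hq'0),
      Equiv.swap_apply_left]
  have hτ1 : τ 1 = q := by
    rw [hτdef, Equiv.trans_apply, Equiv.swap_apply_left, hswq']
  -- the adapted basis
  set f : Fin (m+3) → nV (m+2) :=
    fun i => if i = 0 then u else if i = 1 then v else sb (m+2) (τ i) with hfdef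
  have hf0 : f 0 = u := by simp [hfdef]
  have hf1 : f 1 = v := by simp [hfdef, Ne.symm h01]
  have hfi : ∀ i, i ≠ 0 → i ≠ 1 → f i = sb (m+2) (τ i) := by
    intro i hi0 hi1; simp [hfdef, hi0, hi1]
  have hne01 : ∀ i : Fin (m+1), ((i.succ.succ : Fin (m+3)) ≠ 0 ∧ (i.succ.succ : Fin (m+3)) ≠ 1) := by
    intro i
    refine ⟨Fin.succ_ne_zero _, ?_⟩
    rw [← Fin.succ_zero_eq_one]
    intro hcon
    exact Fin.succ_ne_zero i (Fin.succ_injective _ hcon)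
  have hzero : ∀ (i : Fin (m+1)) (r : Fin (m+3)), τ i.succ.succ ≠ r → f i.succ.succ r = 0 := by
    intro i r hr
    rw [hfi _ (hne01 i).1 (hne01 i).2, sb_apply, if_neg (Ne.symm hr)]
  have hcard : Fintype.card (Fin (m+3)) = Module.finrank ℂ (nV (m+2)) := by
    simp [Module.finrank_fin_fun]
  have hind : LinearIndependent ℂ f := by
    rw [Fintype.linearIndependent_iff]
    intro c hc
    have hcoord : ∀ r : Fin (m+3), ∑ i, c i * f i r = 0 := by
      intro r
      have := congrFun hc r
      simpa [Finset.sum_apply] using this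
    have key : ∀ r : Fin (m+3), (∀ i : Fin (m+1), f i.succ.succ r = 0) →
        c 0 * f 0 r + c 1 * f 1 r = 0 := by
      intro r hr
      have h := hcoord r
      rw [Fin.sum_univ_succ, Fin.sum_univ_succ] at h
      simpa [hr, Fin.succ_zero_eq_one] using h
    have hp : c 0 * u p + c 1 * v p = 0 := by
      have := key p (fun i => hzero i p (fun hcon => Fin.succ_ne_zero i.succ
        (τ.injective (hcon.trans hτ0.symm))))
      rwa [hf0, hf1] at this
    have hq : c 0 * u q + c 1 * v q = 0 := by
      have := key q (fun i => hzero i q (fun hcon => (hne01 i).2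
        (τ.injective (hcon.trans hτ1.symm))))
      rwa [hf0, hf1] at this
    have hc0 : c 0 = 0 := by
      have h0 : c 0 * (u p * v q - v p * u q) = 0 := by linear_combination v q * hp - v p * hq
      exact (mul_eq_zero.1 h0).resolve_right hm
    have hc1 : c 1 = 0 := by
      have h1 : c 1 * (u p * v q - v p * u q) = 0 := by linear_combination u p * hq - u q * hp
      exact (mul_eq_zero.1 h1).resolve_right hm
    intro i
    by_cases hi0 : i = 0
    · rw [hi0]; exact hc0
    by_cases hi1 : i = 1
    · rw [hi1]; exact hc1
    obtain ⟨i₁, rfl⟩ := Fin.exists_succ_eq.2 hi0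
    have hi₁0 : i₁ ≠ 0 := by rintro rfl; exact hi1 (Fin.succ_zero_eq_one)
    obtain ⟨i₀, rfl⟩ := Fin.exists_succ_eq.2 hi₁0
    have htail : ∀ j : Fin (m+1), f j.succ.succ (τ i₀.succ.succ) = if i₀ = j then 1 else 0 := by
      intro j
      by_cases hj : i₀ = j
      · subst hj
        simp [hfi _ (hne01 i₀).1 (hne01 i₀).2, sb_apply]
      · rw [hzero j _ (fun hcon => hj (Fin.succ_injective _ (Fin.succ_injective _
          (τ.injective hcon.symm)))), if_neg hj]
    have h := hcoord (τ i₀.succ.succ)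
    rw [Fin.sum_univ_succ, Fin.sum_univ_succ] at h
    simp only [Fin.succ_zero_eq_one, hc0, hc1, zero_mul, zero_add, htail, mul_ite, mul_one,
      mul_zero] at h
    rwa [Finset.sum_ite_eq, if_pos (Finset.mem_univ _)] at h
  -- build the linear equivalence
  let b : Module.Basis (Fin (m+3)) ℂ (nV (m+2)) := basisOfLinearIndependentOfCardEqFinrank hind hcard
  have hb : ∀ i, b i = f i := by
    intro i
    rw [show b = basisOfLinearIndependentOfCardEqFinrank hind hcard from rfl,
      coe_basisOfLinearIndependentOfCardEqFinrank]
  let g₀ : nV (m+2) ≃ₗ[ℂ] nV (m+2) := (Pi.basisFun ℂ (Fin (m+3))).equiv b (Equiv.refl _)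
  have hg₀ : ∀ i, g₀ (sb (m+2) i) = f i := by
    intro i
    have hsb : sb (m+2) i = (Pi.basisFun ℂ (Fin (m+3))) i := by
      rw [Pi.basisFun_apply]; rfl
    rw [hsb]
    rw [show g₀ = (Pi.basisFun ℂ (Fin (m+3))).equiv b (Equiv.refl _) from rfl,
      Module.Basis.equiv_apply, Equiv.refl_apply, hb]
  set δ := LinearMap.det g₀.toLinearMap with hδdef
  have hδ : δ ≠ 0 := (LinearEquiv.isUnit_det' g₀).ne_zero
  let h2 : nV (m+2) ≃ₗ[ℂ] nV (m+2) := LinearEquiv.piCongrRight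
    (fun i : Fin (m+3) =>
      if i = 2 then LinearEquiv.smulOfNeZero ℂ ℂ δ⁻¹ (inv_ne_zero hδ) else LinearEquiv.refl ℂ ℂ)
  have h2app : ∀ (x : nV (m+2)) (r : Fin (m+3)),
      h2 x r = if r = 2 then δ⁻¹ * x r else x r := by
    intro x r
    show (LinearEquiv.piCongrRight _) x r = _
    rw [LinearEquiv.piCongrRight_apply]
    by_cases hr : r = 2 <;>
      simp [hr, LinearEquiv.smulOfNeZero, LinearEquiv.smulOfUnit, Units.smul_def,
        DistribMulAction.toLinearEquiv, DistribMulAction.toLinearMap, smul_eq_mul]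
  have h2sb : ∀ i : Fin (m+3), i ≠ 2 → h2 (sb (m+2) i) = sb (m+2) i := by
    intro i hi
    funext r
    rw [h2app]
    by_cases hr : r = 2
    · rw [if_pos hr, hr,
        show sb (m+2) i 2 = 0 from by rw [sb_apply, if_neg (fun hcon => hi hcon.symm)],
        mul_zero]
    · rw [if_neg hr]
  have hdet2 : LinearMap.det h2.toLinearMap = δ⁻¹ := by
    rw [← LinearMap.det_toMatrix' h2.toLinearMap]
    have hmat : LinearMap.toMatrix' h2.toLinearMap
        = Matrix.diagonal (fun i : Fin (m+3) => if i = 2 then δ⁻¹ else 1) := by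
      ext i j
      rw [LinearMap.toMatrix'_apply]
      show h2 (Pi.single j 1) i = _
      rw [h2app, Matrix.diagonal_apply]
      by_cases hij : i = j
      · subst hij
        by_cases hi2 : i = 2 <;> simp [hi2]
      · rw [Pi.single_eq_of_ne hij, if_neg hij]
        by_cases hi2 : i = 2 <;> simp [hij, hi2]
    rw [hmat, Matrix.det_diagonal]
    simp [Finset.prod_ite_eq']
  let g : nV (m+2) ≃ₗ[ℂ] nV (m+2) := h2.trans g₀
  have hgdet : LinearMap.det g.toLinearMap = 1 := by
    have hcomp : g.toLinearMap = g₀.toLinearMap ∘ₗ h2.toLinearMap := rfl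
    rw [hcomp, LinearMap.det_comp, hdet2, ← hδdef, mul_inv_cancel₀ hδ]
  have hg0 : g (sb (m+2) 0) = u := by
    show g₀ (h2 (sb (m+2) 0)) = u
    rw [h2sb 0 (Ne.symm (fin_two_ne_zero m)), hg₀, hf0]
  have hg1 : g (sb (m+2) 1) = v := by
    show g₀ (h2 (sb (m+2) 1)) = v
    rw [h2sb 1 (Ne.symm (fin_two_ne_one m)), hg₀, hf1]
  refine ⟨g, ?_⟩
  rw [orbit_form (by omega) hμ g, hgdet, hg0, hg1, inv_one, one_smul]


/-- explicit 3×3 minor of the components of three vectors. -/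
def m3 (n : ℕ) (a b c : nV n) (p q s : Fin (n+1)) : ℂ :=
  a p * (b q * c s - b s * c q) - b p * (a q * c s - a s * c q) + c p * (a q * b s - a s * b q)

/-- the determinant `det[w, y₁, …, yₙ]` as a plain function. -/
noncomputable def rdet (n : ℕ) (w : nV n) (y : Fin n → nV n) : ℂ :=
  Matrix.det (Matrix.of (Matrix.vecCons w y))

lemma rdet_eq_dC (n : ℕ) (w : nV n) (y : Fin n → nV n) : rdet n w y = dC n w y := rfl

/-- The closed, orbit-containing set of "candidate" multiplications. -/
def SS (n : ℕ) : Set ((Fin n → nV n) → nV n) :=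
  {ν | (∀ (x : Fin n → nV n) (i : Fin n) (a b : nV n),
          ν (update x i (a + b)) = ν (update x i a) + ν (update x i b)) ∧
       (∀ (x : Fin n → nV n) (i : Fin n) (c : ℂ) (a : nV n),
          ν (update x i (c • a)) = c • ν (update x i a)) ∧
       (∀ (x : Fin n → nV n) (i j : Fin n), i ≠ j → x i = x j → ν x = 0) ∧
       (∀ x y : Fin n → nV n, rdet n (ν x) y + rdet n (ν y) x = 0) ∧
       (∀ x y z : Fin n → nV n, ∀ p q s : Fin (n+1), m3 n (ν x) (ν y) (ν z) p q s = 0)}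

lemma isClosed_SS (n : ℕ) : IsClosed (SS n) := by
  have hev : ∀ (x : Fin n → nV n) (r : Fin (n+1)),
      Continuous fun ν : (Fin n → nV n) → nV n => ν x r :=
    fun x r => (continuous_apply r).comp (continuous_apply x)
  have hevv : ∀ (x : Fin n → nV n), Continuous fun ν : (Fin n → nV n) → nV n => ν x :=
    fun x => continuous_apply x
  have hrd : ∀ (x y : Fin n → nV n),
      Continuous fun ν : (Fin n → nV n) → nV n => rdet n (ν x) y := by
    intro x y
    have hM : Continuous fun ν : (Fin n → nV n) → nV n =>
        (Matrix.of (Matrix.vecCons (ν x) y) : Matrix (Fin (n+1)) (Fin (n+1)) ℂ) := by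
      apply continuous_matrix
      intro r c
      refine Fin.cases ?_ ?_ r
      · simpa using hev x c
      · intro i; simpa using continuous_const
    exact hM.matrix_det
  have h1 : IsClosed {ν : (Fin n → nV n) → nV n | ∀ (x : Fin n → nV n) (i : Fin n) (a b : nV n),
      ν (update x i (a + b)) = ν (update x i a) + ν (update x i b)} := by
    simp only [Set.setOf_forall]
    exact isClosed_iInter fun x => isClosed_iInter fun i => isClosed_iInter fun a =>
      isClosed_iInter fun b => isClosed_eq (hevv _) ((hevv _).add (hevv _))
  have h2 : IsClosed {ν : (Fin n → nV n) → nV n | ∀ (x : Fin n → nV n) (i : Fin n) (c : ℂ)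
      (a : nV n), ν (update x i (c • a)) = c • ν (update x i a)} := by
    simp only [Set.setOf_forall]
    exact isClosed_iInter fun x => isClosed_iInter fun i => isClosed_iInter fun c =>
      isClosed_iInter fun a => isClosed_eq (hevv _) ((hevv _).const_smul c)
  have h3 : IsClosed {ν : (Fin n → nV n) → nV n | ∀ (x : Fin n → nV n) (i j : Fin n),
      i ≠ j → x i = x j → ν x = 0} := by
    simp only [Set.setOf_forall]
    refine isClosed_iInter fun x => isClosed_iInter fun i => isClosed_iInter fun j =>
      isClosed_iInter fun _ => isClosed_iInter fun _ => isClosed_eq (hevv _) continuous_const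
  have h4 : IsClosed {ν : (Fin n → nV n) → nV n | ∀ x y : Fin n → nV n,
      rdet n (ν x) y + rdet n (ν y) x = 0} := by
    simp only [Set.setOf_forall]
    exact isClosed_iInter fun x => isClosed_iInter fun y =>
      isClosed_eq ((hrd x y).add (hrd y x)) continuous_const
  have h5 : IsClosed {ν : (Fin n → nV n) → nV n | ∀ x y z : Fin n → nV n,
      ∀ p q s : Fin (n+1), m3 n (ν x) (ν y) (ν z) p q s = 0} := by
    simp only [Set.setOf_forall]
    refine isClosed_iInter fun x => isClosed_iInter fun y => isClosed_iInter fun z =>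
      isClosed_iInter fun p => isClosed_iInter fun q => isClosed_iInter fun s =>
      isClosed_eq ?_ continuous_const
    exact (((hev x p).mul (((hev y q).mul (hev z s)).sub ((hev y s).mul (hev z q)))).sub
      ((hev y p).mul (((hev x q).mul (hev z s)).sub ((hev x s).mul (hev z q))))).add
      ((hev z p).mul (((hev x q).mul (hev y s)).sub ((hev x s).mul (hev y q))))
  exact h1.inter (h2.inter (h3.inter (h4.inter h5)))

lemma nuA_mem_SS (n : ℕ) (u v : nV n) : ⇑(nuA n u v) ∈ SS n := by
  refine ⟨?_, ?_, ?_, ?_, ?_⟩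
  · intro x i a b
    exact (nuA n u v).toMultilinearMap.map_update_add x i a b
  · intro x i c a
    exact (nuA n u v).toMultilinearMap.map_update_smul x i c a
  · intro x i j hij hxij
    exact (nuA n u v).map_eq_zero_of_eq x hxij hij
  · intro x y
    rw [rdet_eq_dC, rdet_eq_dC, nuA_apply n u v x, nuA_apply n u v y, map_sub, map_sub, map_smul, map_smul,
      map_smul, map_smul]
    simp only [AlternatingMap.sub_apply, AlternatingMap.smul_apply, smul_eq_mul]
    ring
  · intro x y z p q s
    simp only [nuA_apply, m3, Pi.sub_apply, Pi.smul_apply, smul_eq_mul]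
    ring


lemma SS_sub_orbit {n : ℕ} (hn : 2 ≤ n) {μ : AlternatingMap ℂ (nV n) (nV n) (Fin n)}
    (hμ : IsC3 n μ) {ν : (Fin n → nV n) → nV n} (hν : ν ∈ SS n) (h0 : ν ≠ 0) :
    ν ∈ glOrbit n ⇑μ := by
  obtain ⟨hadd, hsmul, halt, hskew, hminor⟩ := hν
  -- package `ν` as an alternating map
  let N : AlternatingMap ℂ (nV n) (nV n) (Fin n) :=
    { toFun := ν
      map_update_add' := by
        intro inst m i x y
        rw [Subsingleton.elim inst (instDecidableEqFin n)]
        exact hadd m i x y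
      map_update_smul' := by
        intro inst m i c x
        rw [Subsingleton.elim inst (instDecidableEqFin n)]
        exact hsmul m i c x
      map_eq_zero_of_eq' := fun x i j hxij hij => halt x i j hij hxij }
  have hcoe : ⇑N = ν := rfl
  -- the sign-twisted structure matrix
  set P : Fin (n+1) → Fin (n+1) → ℂ := fun r c => (-1:ℂ)^(r:ℕ) * ν (bt n c) r with hPdef
  have hsq : ∀ k : ℕ, (-1:ℂ)^k * (-1:ℂ)^k = 1 := by
    intro k
    rw [← pow_add, ← two_mul, pow_mul]
    norm_num
  have hval : ∀ (c r : Fin (n+1)), ν (bt n c) r = (-1:ℂ)^(r:ℕ) * P r c := by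
    intro c r
    rw [hPdef, ← mul_assoc, hsq, one_mul]
  have hPskew : ∀ r c, P r c = - P c r := by
    intro r c
    have h := hskew (bt n c) (bt n r)
    rw [rdet_eq_dC, rdet_eq_dC, dC_bt, dC_bt] at h
    rw [hPdef]
    linear_combination h
  have hPdiag : ∀ r, P r r = 0 := by
    intro r
    have h := hPskew r r
    linear_combination h / 2
  -- a nonzero entry
  have hbne : ∃ c r, ν (bt n c) r ≠ 0 := by
    by_contra hall
    push_neg at hall
    apply h0
    have hNzero : N = (0 : AlternatingMap ℂ (nV n) (nV n) (Fin n)) := by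
      apply ext_of_bt
      intro j
      funext r
      show N (bt n j) r = 0
      exact hall j r
    rw [← hcoe, hNzero]
    rfl
  obtain ⟨q, p, hcr⟩ := hbne
  have hPpq : P p q ≠ 0 := by
    rw [hPdef]
    exact mul_ne_zero (pow_ne_zero _ (by norm_num)) hcr
  have hpq : p ≠ q := by
    rintro rfl
    exact hPpq (hPdiag p)
  -- the Plücker-type relation
  have hpl : ∀ s t : Fin (n+1), P p q * P s t = P s p * P t q - P s q * P t p := by
    intro s t
    have E := hminor (bt n p) (bt n q) (bt n t) p q s
    rw [m3] at E
    simp only [hval] at E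
    rw [hPdiag p, hPdiag q, hPskew q p, hPskew q t, hPskew p t] at E
    have hX : P p q * (P p q * P s t - P s p * P t q + P t p * P s q)
        * ((-1:ℂ)^(p:ℕ) * (-1:ℂ)^(q:ℕ) * (-1:ℂ)^(s:ℕ)) = 0 := by
      linear_combination E
    have hne : ((-1:ℂ)^(p:ℕ) * (-1:ℂ)^(q:ℕ) * (-1:ℂ)^(s:ℕ)) ≠ 0 :=
      mul_ne_zero (mul_ne_zero (pow_ne_zero _ (by norm_num)) (pow_ne_zero _ (by norm_num)))
        (pow_ne_zero _ (by norm_num))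
    have hX2 : P p q * (P p q * P s t - P s p * P t q + P t p * P s q) = 0 :=
      (mul_eq_zero.1 hX).resolve_right hne
    have hX3 : P p q * P s t - P s p * P t q + P t p * P s q = 0 :=
      (mul_eq_zero.1 hX2).resolve_left hPpq
    linear_combination hX3
  -- the rank-one-pair representation
  set U : nV n := fun r => (-1:ℂ)^(r:ℕ) * P r q with hUdef
  set V : nV n := fun r => (-1:ℂ)^(r:ℕ) * ((P p q)⁻¹ * P r p) with hVdef
  have hrep : ∀ (r j : Fin (n+1)),
      ν (bt n j) r = (-1:ℂ)^(j:ℕ) * U j * V r - (-1:ℂ)^(j:ℕ) * V j * U r := by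
    intro r j
    rw [hval j r, hUdef, hVdef]
    show (-1:ℂ)^(r:ℕ) * P r j
        = (-1:ℂ)^(j:ℕ) * ((-1:ℂ)^(j:ℕ) * P j q) * ((-1:ℂ)^(r:ℕ) * ((P p q)⁻¹ * P r p))
          - (-1:ℂ)^(j:ℕ) * ((-1:ℂ)^(j:ℕ) * ((P p q)⁻¹ * P j p)) * ((-1:ℂ)^(r:ℕ) * P r q)
    have h := hpl r j
    have hinv : (P p q)⁻¹ * P p q = 1 := inv_mul_cancel₀ hPpq
    linear_combination (-(-1:ℂ)^(r:ℕ) * P r j) * hinv + ((-1:ℂ)^(r:ℕ) * (P p q)⁻¹) * h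
      - ((-1:ℂ)^(r:ℕ) * (P p q)⁻¹ * (P j q * P r p - P j p * P r q)) * (hsq (j:ℕ))
  have hNnu : N = nuA n U V := by
    apply ext_of_bt
    intro j
    funext r
    rw [hcoe]
    show ν (bt n j) r = nuA n U V (bt n j) r
    rw [nuA_bt, hrep r j]
    simp only [Pi.sub_apply, Pi.smul_apply, smul_eq_mul]
  have hmn : U p * V q - V p * U q ≠ 0 := by
    have hval2 : U p * V q - V p * U q = -((-1:ℂ)^(p:ℕ) * (-1:ℂ)^(q:ℕ) * P p q) := by
      rw [hUdef, hVdef]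
      show (-1:ℂ)^(p:ℕ) * P p q * ((-1:ℂ)^(q:ℕ) * ((P p q)⁻¹ * P q p))
          - (-1:ℂ)^(p:ℕ) * ((P p q)⁻¹ * P p p) * ((-1:ℂ)^(q:ℕ) * P q q) = _
      rw [hPdiag p, hPskew q p]
      field_simp
      ring
    rw [hval2]
    exact neg_ne_zero.2 (mul_ne_zero (mul_ne_zero (pow_ne_zero _ (by norm_num))
      (pow_ne_zero _ (by norm_num))) hPpq)
  have hfin : ν = ⇑(nuA n U V) := by rw [← hcoe, hNnu]
  rw [hfin]
  exact nuA_mem_orbit hn hμ U V p q hmn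


lemma orbit_sub_SS {n : ℕ} (hn : 2 ≤ n) {μ : AlternatingMap ℂ (nV n) (nV n) (Fin n)}
    (hμ : IsC3 n μ) : glOrbit n ⇑μ ⊆ SS n := by
  rintro ν ⟨g, rfl⟩
  rw [orbit_form hn hμ g]
  exact nuA_mem_SS n _ _

lemma zero_mem_closure {n : ℕ} (hn : 2 ≤ n) {μ : AlternatingMap ℂ (nV n) (nV n) (Fin n)}
    (hμ : IsC3 n μ) :
    (0 : (Fin n → nV n) → nV n) ∈ closure (glOrbit n ⇑μ) := by
  have hgk : ∀ k : ℕ, ((k:ℂ)+1) ≠ 0 := fun k => Nat.cast_add_one_ne_zero k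
  let g : ℕ → (nV n ≃ₗ[ℂ] nV n) := fun k =>
    LinearEquiv.smulOfNeZero ℂ (nV n) ((k:ℂ)+1) (hgk k)
  apply mem_closure_of_tendsto (f := fun k : ℕ => glAct n (g k) ⇑μ) (b := Filter.atTop)
  · rw [tendsto_pi_nhds]
    intro x
    have hval : ∀ k : ℕ, glAct n (g k) ⇑μ x
        = ((((k:ℂ)+1)⁻¹)^(n-1)) • μ x := by
      intro k
      show (g k) (μ fun i => (g k).symm (x i)) = _
      have hsymm : ∀ y : nV n, (g k).symm y = ((k:ℂ)+1)⁻¹ • y := by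
        intro y
        have hy : (g k) (((k:ℂ)+1)⁻¹ • y) = y := by
          show ((k:ℂ)+1) • (((k:ℂ)+1)⁻¹ • y) = y
          rw [smul_smul, mul_inv_cancel₀ (hgk k), one_smul]
        exact (LinearEquiv.symm_apply_eq _).2 hy.symm
      simp only [hsymm]
      have hmu : (μ fun i => ((k:ℂ)+1)⁻¹ • x i)
          = (∏ _i : Fin n, ((k:ℂ)+1)⁻¹) • μ x := by
        simpa using μ.toMultilinearMap.map_smul_univ (fun _ => ((k:ℂ)+1)⁻¹) x
      rw [hmu]
      show ((k:ℂ)+1) • ((∏ _i : Fin n, ((k:ℂ)+1)⁻¹) • μ x) = _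
      rw [smul_smul, Finset.prod_const, Finset.card_univ, Fintype.card_fin]
      congr 1
      rw [show ((k:ℂ)+1)⁻¹^n = ((k:ℂ)+1)⁻¹^(n-1) * ((k:ℂ)+1)⁻¹ from by
        rw [← pow_succ]; congr 1; omega]
      rw [show ((k:ℂ)+1) * (((k:ℂ)+1)⁻¹^(n-1) * ((k:ℂ)+1)⁻¹)
          = ((k:ℂ)+1)⁻¹^(n-1) * (((k:ℂ)+1) * ((k:ℂ)+1)⁻¹) from by ring,
        mul_inv_cancel₀ (hgk k), mul_one]
    simp only [hval]
    have hre : Filter.Tendsto (fun k : ℕ => ((k:ℝ)+1)⁻¹) Filter.atTop (nhds 0) := by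
      simpa [one_div] using tendsto_one_div_add_atTop_nhds_zero_nat (𝕜 := ℝ)
    have hcx : Filter.Tendsto (fun k : ℕ => ((k:ℂ)+1)⁻¹) Filter.atTop (nhds 0) := by
      have h1 := (Complex.continuous_ofReal.tendsto 0).comp hre
      have h3 : (Complex.ofReal ∘ fun k : ℕ => ((k:ℝ)+1)⁻¹)
          = fun k : ℕ => ((k:ℂ)+1)⁻¹ := by
        funext k
        simp only [Function.comp_apply]
        push_cast
        ring
      rw [h3] at h1
      simpa using h1
    have hpow : Filter.Tendsto (fun k : ℕ => (((k:ℂ)+1)⁻¹)^(n-1)) Filter.atTop (nhds 0) := by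
      have := hcx.pow (n-1)
      rwa [zero_pow (by omega : n - 1 ≠ 0)] at this
    have := hpow.smul_const (μ x)
    rwa [zero_smul] at this
  · exact Filter.Eventually.of_forall fun k => ⟨g k, rfl⟩

end C3L

/-- For every integer `n ≥ 2`, the algebra `C₃` has level one: the closure of
the `GL(V)`-orbit of the structure of `C₃` is the union of that orbit with the single point
`0` (the zero multiplication). -/
theorem C3_has_level_one (n : ℕ) (hn : 2 ≤ n)
    (μ : AlternatingMap ℂ (nV n) (nV n) (Fin n)) (hμ : IsC3 n μ) :
    closure (glOrbit n ⇑μ) = glOrbit n ⇑μ ∪ {(0 : (Fin n → nV n) → nV n)} := by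
  apply Set.Subset.antisymm
  · intro ν hν
    have hSS : ν ∈ C3L.SS n :=
      closure_minimal (C3L.orbit_sub_SS hn hμ) (C3L.isClosed_SS n) hν
    by_cases h0 : ν = 0
    · exact Set.mem_union_right _ (by simp [h0])
    · exact Set.mem_union_left _ (C3L.SS_sub_orbit hn hμ hSS h0)
  · apply Set.union_subset subset_closure
    intro y hy
    rw [Set.mem_singleton_iff.1 hy]
    exact C3L.zero_mem_closure hn hμ
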